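/- Let A be an abelian category with enough projectives and enough injectives, and U a contravariantly finite partial tilting subcategory with U^⊥₁ = Fac U. Then U is a tilting subcategory: every projective P admits a short exact sequence 0 → P → U⁰ → U¹ → 0 with U⁰, U¹ ∈ U. -/

import Mathlib

open CategoryTheory Limits Opposite

noncomputable section

universe v u

variable {C : Type u} [Category.{v} C] [Abelian C] [EnoughProjectives C]

attribute [local instance] CategoryTheory.Abelian.hasFiniteBiproducts

/-- `Fac M`: quotients of finite direct sums of objects of `M`. -/
def Fac (M : Set C) : Set C :=
  {X | ∃ (n : ℕ) (f : Fin n → C), (∀ i, f i ∈ M) ∧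
    haveI : HasBiproductsOfShape (Fin n) C := HasFiniteBiproducts.out n
    ∃ e : (⨁ f) ⟶ X, Epi e}

/-- Vanishing of `Ext¹(X, Y)`. -/
def ext1Zero (X Y : C) : Prop := Subsingleton (((Ext ℤ C 1).obj (op X)).obj Y)

/-- Vanishing of `Ext²(X, Y)`. -/
def ext2Zero (X Y : C) : Prop := Subsingleton (((Ext ℤ C 2).obj (op X)).obj Y)

/-- `v : P ⟶ V₀` is a left `M`-approximation. -/
def IsLeftApprox (M : Set C) {P V₀ : C} (v : P ⟶ V₀) : Prop :=
  ∀ V' ∈ M, ∀ h : P ⟶ V', ∃ t : V₀ ⟶ V', v ≫ t = h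

/-- `u : U₀ ⟶ X` is a right `M`-approximation. -/
def IsRightApprox (M : Set C) {U₀ X : C} (u : U₀ ⟶ X) : Prop :=
  ∀ M' ∈ M, ∀ h : M' ⟶ X, ∃ t : M' ⟶ U₀, t ≫ u = h

/-- The Ext-projective objects of `S`. -/
def ExtProj (S : Set C) : Set C := {D ∈ S | ∀ Z ∈ S, ext1Zero D Z}

/-- `M` is τ-rigid: `Ext¹(M, Fac M) = 0`. -/
def TauRigid (M : Set C) : Prop := ∀ M₀ ∈ M, ∀ X ∈ Fac M, ext1Zero M₀ X

/-- `P` admits an exact sequence `P ⟶ Ma ⟶ Mb ⟶ 0` with `Ma, Mb ∈ M` and the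
first map a left `M`-approximation. -/
def HasApproxSeq (M : Set C) (P : C) : Prop :=
  ∃ M₀ ∈ M, ∃ M₁ ∈ M, ∃ (m : P ⟶ M₀) (g : M₀ ⟶ M₁) (w : m ≫ g = 0),
    (ShortComplex.mk m g w).Exact ∧ Epi g ∧ IsLeftApprox M m

/-- `M` is a support τ-tilting subcategory. -/
def SupportTauTilting (M : Set C) : Prop :=
  TauRigid M ∧ ∀ P : C, Projective P → HasApproxSeq M P

/-- `0 ⟶ X ⟶ Y ⟶ Z ⟶ 0` is a short exact sequence. -/
def SES {X Y Z : C} (f : X ⟶ Y) (g : Y ⟶ Z) : Prop :=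
  ∃ w : f ≫ g = 0, (ShortComplex.mk f g w).Exact ∧ Mono f ∧ Epi g

/-- `U` is hereditary: `Ext²(U, −) = 0`. -/
def Hereditary1 (U : Set C) : Prop := ∀ U₀ ∈ U, ∀ X : C, ext2Zero U₀ X

/-- `U` is partial tilting. -/
def PartialTilting (U : Set C) : Prop :=
  Hereditary1 U ∧ ∀ U₀ ∈ U, ∀ U₁ ∈ U, ext1Zero U₀ U₁

/-- `U` is tilting. -/
def Tilting (U : Set C) : Prop :=
  PartialTilting U ∧ ∀ P : C, Projective P →
    ∃ Ua ∈ U, ∃ Ub ∈ U, ∃ (i : P ⟶ Ua) (p : Ua ⟶ Ub), SES i p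

/-- `U^⊥₁ = {X | Ext¹(U, X) = 0}`. -/
def Perp1 (U : Set C) : Set C := {X | ∀ U₀ ∈ U, ext1Zero U₀ X}

/-- `M` is closed under finite direct sums and direct summands. -/
def AdditivelyClosed (M : Set C) : Prop :=
  (∀ (n : ℕ) (f : Fin n → C), (∀ i, f i ∈ M) →
    haveI : HasBiproductsOfShape (Fin n) C := HasFiniteBiproducts.out n
    (⨁ f) ∈ M) ∧
  (∀ M₀ ∈ M, ∀ (X : C) (r : M₀ ⟶ X) (s : X ⟶ M₀), s ≫ r = 𝟙 X → X ∈ M)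

/-- The additive closure of a class of objects: direct summands of finite
direct sums of its objects. -/
def AddClosure (X : Set C) : Set C :=
  {Y | ∃ (n : ℕ) (f : Fin n → C), (∀ i, f i ∈ X) ∧
    haveI : HasBiproductsOfShape (Fin n) C := HasFiniteBiproducts.out n
    ∃ (r : (⨁ f) ⟶ Y) (s : Y ⟶ ⨁ f), s ≫ r = 𝟙 Y}

/-! ### Auxiliary lemmas -/

lemma stmt12_subsing_iff_of_iso {A B : ModuleCat.{v} ℤ} (e : A ≅ B) :
    Subsingleton A ↔ Subsingleton B := by
  have eqv : A ≃ B := ((forget (ModuleCat ℤ)).mapIso e).toEquiv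
  exact ⟨fun h => eqv.symm.subsingleton, fun h => eqv.subsingleton⟩

lemma stmt12_subsing_iff_isZero (A : ModuleCat.{v} ℤ) : Subsingleton A ↔ IsZero A := by
  constructor
  · intro h; exact ModuleCat.isZero_of_subsingleton A
  · intro h
    refine ⟨fun a b => ?_⟩
    have h1 : (𝟙 A : A ⟶ A) = 0 := h.eq_of_src _ _
    have h2 : ∀ x : A, x = 0 := fun x => by
      conv_lhs => rw [← ModuleCat.id_apply (M := A) x, h1]
      rfl
    rw [h2 a, h2 b]

/-- Canonical characterization of `Ext¹`-vanishing via the canonical projective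
presentation. -/
lemma ext1Zero_iff_canonical (X Y : C) :
    ext1Zero X Y ↔ ∀ g : kernel (Projective.π X) ⟶ Y,
      ∃ t : Projective.over X ⟶ Y, kernel.ι (Projective.π X) ≫ t = g := by
  have hiso := (ProjectiveResolution.of X).isoExt (R := ℤ) 1 Y
  have hc : (ProjectiveResolution.of X).complex = ProjectiveResolution.ofComplex X := by
    rw [ProjectiveResolution.of]
  rw [hc] at hiso
  have h0 : ext1Zero X Y ↔
      Subsingleton (((ProjectiveResolution.ofComplex X).linearYonedaObj ℤ Y).homology 1) :=
    stmt12_subsing_iff_of_iso hiso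
  set M := (ProjectiveResolution.ofComplex X).linearYonedaObj ℤ Y with hM
  have h1 : ext1Zero X Y ↔
      (∀ (x₂ : (ProjectiveResolution.ofComplex X).X 1 ⟶ Y),
        (ProjectiveResolution.ofComplex X).d 2 1 ≫ x₂ = 0 →
        ∃ (x₁ : (ProjectiveResolution.ofComplex X).X 0 ⟶ Y),
          (ProjectiveResolution.ofComplex X).d 1 0 ≫ x₁ = x₂) := by
    rw [h0, stmt12_subsing_iff_isZero, ← HomologicalComplex.exactAt_iff_isZero_homology,
      M.exactAt_iff' 0 1 2 (by simp) (by simp), ShortComplex.moduleCat_exact_iff]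
    constructor
    · intro h x₂ hx₂
      obtain ⟨x₁, hx₁⟩ := h x₂ hx₂
      exact ⟨x₁, hx₁⟩
    · intro h x₂ hx₂
      obtain ⟨x₁, hx₁⟩ := h x₂ hx₂
      exact ⟨x₁, hx₁⟩
  rw [h1]
  set p := Projective.π X with hp
  set K := kernel p with hK
  set κ := kernel.ι p with hκ
  set πK := Projective.π K with hπK
  have hd10 : (ProjectiveResolution.ofComplex X).d 1 0 = πK ≫ κ := by
    rw [ProjectiveResolution.ofComplex_d_1_0]; rfl
  have hd21d10 : (ProjectiveResolution.ofComplex X).d 2 1 ≫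
      (ProjectiveResolution.ofComplex X).d 1 0 = 0 :=
    HomologicalComplex.d_comp_d _ 2 1 0
  constructor
  · intro h g
    have hx₂ : (ProjectiveResolution.ofComplex X).d 2 1 ≫
        ((πK ≫ g : (ProjectiveResolution.ofComplex X).X 1 ⟶ Y)) = 0 := by
      have hz : (ProjectiveResolution.ofComplex X).d 2 1 ≫ πK = 0 := by
        rw [← cancel_mono κ]
        exact (Category.assoc _ _ _).trans (((congrArg ((ProjectiveResolution.ofComplex X).d 2 1 ≫ ·) hd10).symm.trans hd21d10).trans zero_comp.symm)
      exact (Category.assoc _ _ _).symm.trans ((congrArg (· ≫ g) hz).trans zero_comp)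
    obtain ⟨t, ht⟩ := h (πK ≫ g) hx₂
    refine ⟨t, ?_⟩
    exact (cancel_epi πK).mp ((Category.assoc _ _ _).symm.trans ((congrArg (· ≫ t) hd10).symm.trans ht))
  · intro h x₂ hx₂
    have hTex : ((ProjectiveResolution.ofComplex X).sc' 2 1 0).Exact := by
      rw [← HomologicalComplex.exactAt_iff' _ 2 1 0 (by simp) (by simp)]
      exact ProjectiveResolution.ofComplex_exactAt_succ X 0
    have hepi' : Epi (kernel.lift ((ProjectiveResolution.ofComplex X).d 1 0)
        ((ProjectiveResolution.ofComplex X).d 2 1) hd21d10) :=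
      (ShortComplex.exact_iff_epi_kernel_lift _).mp hTex
    have hk1 : kernel.ι ((ProjectiveResolution.ofComplex X).d 1 0) ≫ x₂ = 0 := by
      rw [← cancel_epi (kernel.lift ((ProjectiveResolution.ofComplex X).d 1 0)
          ((ProjectiveResolution.ofComplex X).d 2 1) hd21d10),
        comp_zero, ← Category.assoc, kernel.lift_ι]
      exact hx₂
    have hk2 : kernel.ι πK ≫ x₂ = 0 := by
      have hz : kernel.ι πK ≫ (ProjectiveResolution.ofComplex X).d 1 0 = 0 := by
        exact (congrArg (kernel.ι πK ≫ ·) hd10).trans ((Category.assoc _ _ _).symm.trans ((congrArg (· ≫ κ) (kernel.condition πK)).trans zero_comp))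
      have hlift := kernel.lift_ι ((ProjectiveResolution.ofComplex X).d 1 0) (kernel.ι πK) hz
      calc kernel.ι πK ≫ x₂
          = (kernel.lift _ _ hz ≫ kernel.ι ((ProjectiveResolution.ofComplex X).d 1 0)) ≫ x₂ := by
            exact (congrArg (· ≫ x₂) hlift).symm
        _ = 0 := by exact (Category.assoc _ _ _).trans ((congrArg (_ ≫ ·) hk1).trans comp_zero)
    have hg := Abelian.comp_epiDesc πK x₂ hk2
    obtain ⟨t, ht⟩ := h (Abelian.epiDesc πK x₂ hk2)
    refine ⟨t, ?_⟩
    exact (congrArg (· ≫ t) hd10).trans ((Category.assoc _ _ _).trans ((congrArg (πK ≫ ·) ht).trans hg))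
/-- The lifting property transfers between projective presentations. -/
lemma stmt12_lift_transfer {K Q K' Q' X Y : C}
    (m : K ⟶ Q) (p : Q ⟶ X) (w : m ≫ p = 0) (hex : (ShortComplex.mk m p w).Exact)
    [Mono m] [Epi p] [Projective Q]
    (m' : K' ⟶ Q') (p' : Q' ⟶ X) (w' : m' ≫ p' = 0) (hex' : (ShortComplex.mk m' p' w').Exact)
    [Mono m'] [Epi p'] [Projective Q']
    (h : ∀ g : K ⟶ Y, ∃ t : Q ⟶ Y, m ≫ t = g) :
    ∀ g : K' ⟶ Y, ∃ t : Q' ⟶ Y, m' ≫ t = g := by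
  haveI : Mono (ShortComplex.mk m p w).f := ‹Mono m›
  haveI : Mono (ShortComplex.mk m' p' w').f := ‹Mono m'›
  intro g
  set α : Q ⟶ Q' := Projective.factorThru p p' with hα
  have hαp : α ≫ p' = p := Projective.factorThru_comp _ _
  set α' : Q' ⟶ Q := Projective.factorThru p' p with hα'
  have hα'p : α' ≫ p = p' := Projective.factorThru_comp _ _
  have hβ0 : (m ≫ α) ≫ p' = 0 := by rw [Category.assoc, hαp, w]
  set β : K ⟶ K' := hex'.lift (m ≫ α) hβ0 with hβdef
  have hβ : β ≫ m' = m ≫ α := hex'.lift_f _ _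
  have hβ'0 : (m' ≫ α') ≫ p = 0 := by rw [Category.assoc, hα'p, w']
  set β' : K' ⟶ K := hex.lift (m' ≫ α') hβ'0 with hβ'def
  have hβ' : β' ≫ m = m' ≫ α' := hex.lift_f _ _
  have hσ0 : (α' ≫ α - 𝟙 Q') ≫ p' = 0 := by
    rw [Preadditive.sub_comp, Category.assoc, hαp, hα'p, Category.id_comp, sub_self]
  set σ : Q' ⟶ K' := hex'.lift (α' ≫ α - 𝟙 Q') hσ0 with hσdef
  have hσ : σ ≫ m' = α' ≫ α - 𝟙 Q' := hex'.lift_f _ _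
  have e2 : m' ≫ (α' ≫ α) = (β' ≫ β) ≫ m' := by
    rw [← Category.assoc, ← hβ', Category.assoc, ← hβ, ← Category.assoc]
  have hm'σ : m' ≫ σ = β' ≫ β - 𝟙 K' := by
    rw [← cancel_mono m', Category.assoc, hσ, Preadditive.comp_sub, Category.comp_id, e2,
      Preadditive.sub_comp, Category.id_comp]
  obtain ⟨t, ht⟩ := h (β ≫ g)
  refine ⟨α' ≫ t - σ ≫ g, ?_⟩
  have e3 : m' ≫ (α' ≫ t) = β' ≫ (β ≫ g) := by
    rw [← Category.assoc, ← hβ', Category.assoc, ht]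
  have e4 : m' ≫ (σ ≫ g) = (β' ≫ β) ≫ g - g := by
    rw [← Category.assoc, hm'σ, Preadditive.sub_comp, Category.id_comp]
  rw [Preadditive.comp_sub, e3, e4, ← Category.assoc]
  abel

/-- Master lemma: `Ext¹(X, Y) = 0` iff maps extend along any projective presentation. -/
lemma ext1Zero_iff_lift {K Q X : C} (m : K ⟶ Q) (p : Q ⟶ X) (w : m ≫ p = 0)
    (hex : (ShortComplex.mk m p w).Exact) [Mono m] [Epi p] [Projective Q] (Y : C) :
    ext1Zero X Y ↔ ∀ g : K ⟶ Y, ∃ t : Q ⟶ Y, m ≫ t = g := by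
  have hexc : (ShortComplex.mk (kernel.ι (Projective.π X)) (Projective.π X)
      (kernel.condition _)).Exact :=
    ShortComplex.exact_of_f_is_kernel _ (kernelIsKernel _)
  constructor
  · intro h
    exact stmt12_lift_transfer _ _ _ hexc m p w hex ((ext1Zero_iff_canonical X Y).mp h)
  · intro h
    exact (ext1Zero_iff_canonical X Y).mpr (stmt12_lift_transfer m p w hex _ _ _ hexc h)

lemma ext1Zero_of_injective (X I : C) [Injective I] : ext1Zero X I :=
  (ext1Zero_iff_canonical X I).mpr
    (fun g => ⟨Injective.factorThru g (kernel.ι _), Injective.comp_factorThru _ _⟩)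

/-- If `0 → L → W → Cq → 0` is exact, maps `V → Cq` lift to `W`, and
`Ext¹(V, W) = 0`, then `Ext¹(V, L) = 0`. -/
lemma stmt12_ext1Zero_kernel (V : C) {L W Cq : C} (l : L ⟶ W) (wq : W ⟶ Cq) (hz : l ≫ wq = 0)
    (hex : (ShortComplex.mk l wq hz).Exact) [Mono l] [Epi wq]
    (hsurj : ∀ h : V ⟶ Cq, ∃ t : V ⟶ W, t ≫ wq = h)
    (hVW : ext1Zero V W) : ext1Zero V L := by
  haveI : Mono (ShortComplex.mk l wq hz).f := ‹Mono l›
  rw [ext1Zero_iff_canonical] at hVW ⊢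
  intro g
  obtain ⟨s, hs⟩ := hVW (g ≫ l)
  set p := Projective.π V with hpdef
  have h0 : kernel.ι p ≫ (s ≫ wq) = 0 := by
    rw [← Category.assoc, hs, Category.assoc, hz, comp_zero]
  obtain ⟨t₁, ht₁⟩ := hsurj (Abelian.epiDesc p (s ≫ wq) h0)
  have hd : (s - p ≫ t₁) ≫ wq = 0 := by
    rw [Preadditive.sub_comp, Category.assoc, ht₁, Abelian.comp_epiDesc, sub_self]
  set t := hex.lift (s - p ≫ t₁) hd with htdef
  have htl : t ≫ l = s - p ≫ t₁ := hex.lift_f _ _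
  refine ⟨t, ?_⟩
  rw [← cancel_mono l, Category.assoc, htl, Preadditive.comp_sub, hs, ← Category.assoc,
    kernel.condition, zero_comp, sub_zero]

/-- `Ext¹(V, −) = 0` is closed under extensions. -/
lemma stmt12_ext1Zero_extension (V : C) {L E I : C} (l : L ⟶ E) (f : E ⟶ I) (hz : l ≫ f = 0)
    (hex : (ShortComplex.mk l f hz).Exact) [Mono l] [Epi f]
    (hVL : ext1Zero V L) (hVI : ext1Zero V I) : ext1Zero V E := by
  haveI : Mono (ShortComplex.mk l f hz).f := ‹Mono l›
  rw [ext1Zero_iff_canonical] at hVL hVI ⊢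
  intro g
  obtain ⟨s, hs⟩ := hVI (g ≫ f)
  set s' : Projective.over V ⟶ E := Projective.factorThru s f with hs'def
  have hs' : s' ≫ f = s := Projective.factorThru_comp _ _
  have hz2 : (g - kernel.ι (Projective.π V) ≫ s') ≫ f = 0 := by
    rw [Preadditive.sub_comp, Category.assoc, hs', hs, sub_self]
  set g₂ := hex.lift _ hz2 with hg₂def
  have hg₂ : g₂ ≫ l = g - kernel.ι (Projective.π V) ≫ s' := hex.lift_f _ _
  obtain ⟨t₂, ht₂⟩ := hVL g₂
  refine ⟨s' + t₂ ≫ l, ?_⟩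
  rw [Preadditive.comp_add, ← Category.assoc, ht₂, hg₂]
  abel

/-- If `0 → P → E → W → 0` is exact with `P` projective and `Ext¹(W, Y) = 0`,
then `Ext¹(E, Y) = 0`. -/
lemma stmt12_ext1Zero_coker (Y : C) {P E W : C} (e : P ⟶ E) (s : E ⟶ W) (hz : e ≫ s = 0)
    (hex : (ShortComplex.mk e s hz).Exact) [Mono e] [Epi s] [Projective P]
    (hWY : ext1Zero W Y) : ext1Zero E Y := by
  haveI : Mono (ShortComplex.mk e s hz).f := ‹Mono e›
  set pE := Projective.π E with hpEdef
  set κ := kernel.ι pE with hκdef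
  rw [ext1Zero_iff_canonical]
  intro g
  haveI : Epi (pE ≫ s) := epi_comp _ _
  set κ'' := kernel.ι (pE ≫ s) with hκ''def
  have hj0 : κ ≫ (pE ≫ s) = 0 := by rw [← Category.assoc, kernel.condition, zero_comp]
  set j : kernel pE ⟶ kernel (pE ≫ s) := kernel.lift _ κ hj0 with hjdef
  have hj : j ≫ κ'' = κ := kernel.lift_ι _ _ _
  have hq0 : (κ'' ≫ pE) ≫ s = 0 := by rw [Category.assoc, kernel.condition]
  set q : kernel (pE ≫ s) ⟶ P := hex.lift (κ'' ≫ pE) hq0 with hqdef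
  have hq : q ≫ e = κ'' ≫ pE := hex.lift_f _ _
  set lam := Projective.factorThru e pE with hlamdef
  have hlam : lam ≫ pE = e := Projective.factorThru_comp _ _
  have hσ0 : lam ≫ (pE ≫ s) = 0 := by rw [← Category.assoc, hlam, hz]
  set σP : P ⟶ kernel (pE ≫ s) := kernel.lift _ lam hσ0 with hσPdef
  have hσP : σP ≫ κ'' = lam := kernel.lift_ι _ _ _
  have hσPq : σP ≫ q = 𝟙 P := by
    rw [← cancel_mono e, Category.assoc, hq, ← Category.assoc, hσP, hlam, Category.id_comp]
  have c1 : (q ≫ σP) ≫ κ'' = q ≫ lam := by rw [Category.assoc, hσP]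
  have hθ0 : ((𝟙 _ - q ≫ σP) ≫ κ'') ≫ pE = 0 := by
    rw [Preadditive.sub_comp, Category.id_comp, c1, Preadditive.sub_comp,
      Category.assoc, hlam, ← hq, sub_self]
  set ρ : kernel (pE ≫ s) ⟶ kernel pE := kernel.lift pE ((𝟙 _ - q ≫ σP) ≫ κ'') hθ0 with hρdef
  have hρ : ρ ≫ κ = (𝟙 _ - q ≫ σP) ≫ κ'' := kernel.lift_ι _ _ _
  have hjq : j ≫ q = 0 := by
    rw [← cancel_mono e, Category.assoc, hq, ← Category.assoc, hj, kernel.condition, zero_comp]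
  have hjρ : j ≫ ρ = 𝟙 _ := by
    rw [← cancel_mono κ, Category.assoc, hρ, Category.id_comp]
    have hstep : j ≫ (𝟙 _ - q ≫ σP) = j := by
      rw [Preadditive.comp_sub, Category.comp_id, ← Category.assoc, hjq, zero_comp, sub_zero]
    rw [← Category.assoc, hstep, hj]
  have hex'' : (ShortComplex.mk κ'' (pE ≫ s) (kernel.condition _)).Exact :=
    ShortComplex.exact_of_f_is_kernel _ (kernelIsKernel _)
  have hlp := (ext1Zero_iff_lift κ'' (pE ≫ s) (kernel.condition _) hex'' Y).mp hWY
  obtain ⟨t, ht⟩ := hlp (ρ ≫ g)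
  refine ⟨t, ?_⟩
  have : κ ≫ t = g := by
    rw [← hj, Category.assoc, ht, ← Category.assoc, hjρ, Category.id_comp]
  exact this

/-- A short exact sequence `0 → L' → U₄ → E → 0` with `Ext¹(E, L') = 0` splits. -/
lemma stmt12_splitting {L' U₄ E : C} (m : L' ⟶ U₄) (r : U₄ ⟶ E) (hz : m ≫ r = 0)
    (hex : (ShortComplex.mk m r hz).Exact) [Mono m] [Epi r]
    (hE : ext1Zero E L') : ∃ σ : E ⟶ U₄, σ ≫ r = 𝟙 E := by
  haveI : Mono (ShortComplex.mk m r hz).f := ‹Mono m›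
  set pE := Projective.π E with hpEdef
  set κ := kernel.ι pE with hκdef
  set φ := Projective.factorThru pE r with hφdef
  have hφ : φ ≫ r = pE := Projective.factorThru_comp _ _
  have hψ0 : (κ ≫ φ) ≫ r = 0 := by rw [Category.assoc, hφ, kernel.condition]
  set ψ := hex.lift (κ ≫ φ) hψ0 with hψdef
  have hψ : ψ ≫ m = κ ≫ φ := hex.lift_f _ _
  obtain ⟨t, ht⟩ := (ext1Zero_iff_canonical E L').mp hE ψ
  have h1 : κ ≫ (φ - t ≫ m) = 0 := by
    rw [Preadditive.comp_sub, ← Category.assoc, ht, hψ, sub_self]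
  set σ := Abelian.epiDesc pE (φ - t ≫ m) h1 with hσdef
  have hσ : pE ≫ σ = φ - t ≫ m := Abelian.comp_epiDesc _ _ _
  refine ⟨σ, ?_⟩
  rw [← cancel_epi pE, ← Category.assoc, hσ, Preadditive.sub_comp, hφ, Category.assoc, hz,
    comp_zero, sub_zero, Category.comp_id]

/-- A right approximation of an object of `Fac U` is an epimorphism. -/
lemma stmt12_approx_epi {U : Set C} {U₀ X : C} (u : U₀ ⟶ X) (hu : IsRightApprox U u)
    (hX : X ∈ Fac U) : Epi u := by
  obtain ⟨n, f, hf, e, he⟩ := hX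
  haveI : HasBiproductsOfShape (Fin n) C := HasFiniteBiproducts.out n
  choose t ht using fun i => hu (f i) (hf i) (biproduct.ι f i ≫ e)
  have hdesc : biproduct.desc t ≫ u = e := by
    apply biproduct.hom_ext'
    intro i
    rw [biproduct.ι_desc_assoc, ht i]
  haveI : Epi (biproduct.desc t ≫ u) := by rw [hdesc]; exact he
  exact epi_of_epi (biproduct.desc t) u

theorem stmt12 [EnoughInjectives C] (U : Set C)
    (hsummand : ∀ M₀ ∈ U, ∀ (X : C) (r : M₀ ⟶ X) (s : X ⟶ M₀), s ≫ r = 𝟙 X → X ∈ U)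
    (hcf : ∀ X : C, ∃ U₀ ∈ U, ∃ u : U₀ ⟶ X, IsRightApprox U u)
    (hpt : PartialTilting U) (hperp : Perp1 U = Fac U) :
    ∀ P : C, Projective P →
      ∃ Ua ∈ U, ∃ Ub ∈ U, ∃ (i : P ⟶ Ua) (p : Ua ⟶ Ub), SES i p := by
  intro P hP
  haveI := hP
  set I := Injective.under P with hIdef
  set ι := Injective.ι P with hιdef
  set π := cokernel.π ι with hπdef
  have hS1z : ι ≫ π = 0 := cokernel.condition ι
  have hS1 : (ShortComplex.mk ι π hS1z).Exact :=
    ShortComplex.exact_of_g_is_cokernel _ (cokernelIsCokernel ι)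
  haveI : Mono (ShortComplex.mk ι π hS1z).f := by
    show Mono ι; infer_instance
  -- `I` and the cokernel lie in `Fac U`
  have hIperp : I ∈ Perp1 U := fun U₀ _ => ext1Zero_of_injective U₀ I
  have hIFac : I ∈ Fac U := by rw [← hperp]; exact hIperp
  have hCFac : cokernel ι ∈ Fac U := by
    obtain ⟨n, f, hf, e, he⟩ := hIFac
    refine ⟨n, f, hf, e ≫ π, ?_⟩
    haveI := he
    exact epi_comp e π
  -- right approximation of the cokernel
  obtain ⟨W, hW, wq, hwq⟩ := hcf (cokernel ι)
  haveI hwepi : Epi wq := stmt12_approx_epi wq hwq hCFac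
  set l := kernel.ι wq with hldef
  have hS2 : (ShortComplex.mk l wq (kernel.condition wq)).Exact :=
    ShortComplex.exact_of_f_is_kernel _ (kernelIsKernel wq)
  have hLperp : kernel wq ∈ Perp1 U := by
    intro U₀ hU₀
    exact stmt12_ext1Zero_kernel U₀ l wq (kernel.condition wq) hS2
      (fun h => hwq U₀ hU₀ h) (hpt.2 U₀ hU₀ W hW)
  -- the pullback E
  set E := pullback π wq with hEdef
  set fst : E ⟶ I := pullback.fst π wq with hfstdef
  set snd : E ⟶ W := pullback.snd π wq with hsnddef
  have hcomm : fst ≫ π = snd ≫ wq := pullback.condition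
  have hePre : ι ≫ π = (0 : P ⟶ W) ≫ wq := by rw [zero_comp, hS1z]
  set e : P ⟶ E := pullback.lift ι 0 hePre with hedef
  have hefst : e ≫ fst = ι := pullback.lift_fst _ _ _
  have hesnd : e ≫ snd = 0 := pullback.lift_snd _ _ _
  haveI : Mono e := by
    haveI : Mono (e ≫ fst) := by rw [hefst]; infer_instance
    exact mono_of_mono e fst
  haveI : Epi snd := by rw [hsnddef]; infer_instance
  haveI : Epi fst := by rw [hfstdef]; infer_instance
  have hl'Pre : (0 : kernel wq ⟶ I) ≫ π = l ≫ wq := by rw [zero_comp, kernel.condition]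
  set l' : kernel wq ⟶ E := pullback.lift 0 l hl'Pre with hl'def
  have hl'fst : l' ≫ fst = 0 := pullback.lift_fst _ _ _
  have hl'snd : l' ≫ snd = l := pullback.lift_snd _ _ _
  haveI : Mono l' := by
    haveI : Mono (l' ≫ snd) := by rw [hl'snd]; infer_instance
    exact mono_of_mono l' snd
  -- exactness of `0 → P → E → W → 0`
  have hS3 : (ShortComplex.mk e snd hesnd).Exact := by
    apply ShortComplex.exact_of_f_is_kernel
    refine KernelFork.IsLimit.ofι' e hesnd (fun {A} k hk => ?_)
    have hkπ : (k ≫ fst) ≫ π = 0 := by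
      rw [Category.assoc, hcomm, ← Category.assoc, hk, zero_comp]
    refine ⟨hS1.lift (k ≫ fst) hkπ, ?_⟩
    have hzι : hS1.lift (k ≫ fst) hkπ ≫ ι = k ≫ fst := hS1.lift_f _ _
    apply pullback.hom_ext
    · rw [Category.assoc]
      show hS1.lift (k ≫ fst) hkπ ≫ (e ≫ fst) = k ≫ fst
      rw [hefst, hzι]
    · rw [Category.assoc]
      show hS1.lift (k ≫ fst) hkπ ≫ (e ≫ snd) = k ≫ snd
      rw [hesnd, hk, comp_zero]
  -- exactness of `0 → kernel wq → E → I → 0`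
  have hS4 : (ShortComplex.mk l' fst hl'fst).Exact := by
    apply ShortComplex.exact_of_f_is_kernel
    refine KernelFork.IsLimit.ofι' l' hl'fst (fun {A} k hk => ?_)
    have hkw : (k ≫ snd) ≫ wq = 0 := by
      rw [Category.assoc, ← hcomm, ← Category.assoc, hk, zero_comp]
    refine ⟨kernel.lift wq (k ≫ snd) hkw, ?_⟩
    have hzι : kernel.lift wq (k ≫ snd) hkw ≫ l = k ≫ snd := kernel.lift_ι _ _ _
    apply pullback.hom_ext
    · rw [Category.assoc]
      show kernel.lift wq (k ≫ snd) hkw ≫ (l' ≫ fst) = k ≫ fst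
      rw [hl'fst, comp_zero, hk]
    · rw [Category.assoc]
      show kernel.lift wq (k ≫ snd) hkw ≫ (l' ≫ snd) = k ≫ snd
      rw [hl'snd, hzι]
  -- `E ∈ Fac U`
  have hEperp : E ∈ Perp1 U := fun U₀ hU₀ =>
    stmt12_ext1Zero_extension U₀ l' fst hl'fst hS4 (hLperp U₀ hU₀) (hIperp U₀ hU₀)
  have hEFac : E ∈ Fac U := by rw [← hperp]; exact hEperp
  -- right approximation of `E` and its kernel
  obtain ⟨U₄, hU₄, r, hr⟩ := hcf E
  haveI : Epi r := stmt12_approx_epi r hr hEFac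
  set m' := kernel.ι r with hm'def
  have hS5 : (ShortComplex.mk m' r (kernel.condition r)).Exact :=
    ShortComplex.exact_of_f_is_kernel _ (kernelIsKernel r)
  have hL'perp : kernel r ∈ Perp1 U := by
    intro U₀ hU₀
    exact stmt12_ext1Zero_kernel U₀ m' r (kernel.condition r) hS5
      (fun h => hr U₀ hU₀ h) (hpt.2 U₀ hU₀ U₄ hU₄)
  have hEL' : ext1Zero E (kernel r) :=
    stmt12_ext1Zero_coker (kernel r) e snd hesnd hS3 (hL'perp W hW)
  obtain ⟨σ, hσ⟩ := stmt12_splitting m' r (kernel.condition r) hS5 hEL'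
  have hEU : E ∈ U := hsummand U₄ hU₄ E r σ hσ
  exact ⟨E, hEU, W, hW, e, snd, hesnd, hS3, ‹Mono e›, ‹Epi snd›⟩
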